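/- Fix ρ ∈ (0,1) and define W_ρ on the closed unit disk by W_ρ(ξ₁,ξ₂) = 4√(4ρ(ρ(ξ₁²+ξ₂²)+ξ₁)+1) · (1−ξ₁²−ξ₂²)² / ( (ρ²(ξ₁²+ξ₂²)−2ρξ₁+1)² · √(1+2(ξ₁²+ξ₂²)) ). Then W_ρ attains its global maximum over the closed unit disk at the point (ρ,0) and only there: W_ρ(ξ) < W_ρ(ρ,0) for every ξ in the closed unit disk with ξ ≠ (ρ,0); and W_ρ(ρ,0) = 4(ρ²−1)²√(4ρ(ρ³+ρ)+1) / ( √(2ρ²+1) · (ρ⁴−2ρ²+1)² ). -/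

import Mathlib

noncomputable section

open Metric

/-- The function `W_ρ` on the closed unit disk (identifying `ℝ²` with `ℂ`). -/
def Wfun (ρ : ℝ) (ξ : ℂ) : ℝ :=
  4 * Real.sqrt (4 * ρ * (ρ * (ξ.re ^ 2 + ξ.im ^ 2) + ξ.re) + 1) *
      (1 - ξ.re ^ 2 - ξ.im ^ 2) ^ 2 /
    ((ρ ^ 2 * (ξ.re ^ 2 + ξ.im ^ 2) - 2 * ρ * ξ.re + 1) ^ 2 *
      Real.sqrt (1 + 2 * (ξ.re ^ 2 + ξ.im ^ 2)))

lemma Gpos (p S S1 : ℝ) (hp0 : 0 ≤ p) (hp1 : p < 1) :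
    0 < (6+32*p+76*p^2+120*p^3+118*p^4+56*p^5+24*p^6)
      - (4+20*p+36*p^2+32*p^3+16*p^4)*(S+S1)
      + (1+2*p)^2*(S^2+S*S1+S1^2) := by
  nlinarith [sq_nonneg (2*(1+2*p)^2*S+(1+2*p)^2*S1-(4+20*p+36*p^2+32*p^3+16*p^4)),
    sq_nonneg (3*(1+2*p)^2*S1-(4+20*p+36*p^2+32*p^3+16*p^4)),
    mul_pos (pow_pos (sub_pos.2 hp1) 4) (pow_pos (by positivity : (0:ℝ) < 1+2*p) 4),
    sq_nonneg (1+2*p)]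

lemma keypoly (r u : ℝ) (hr0 : 0 < r) (hr1 : r < 1) (hu0 : 0 ≤ u) (hu1 : u ≤ 1)
    (hne : u ≠ r) :
    (2*r*u+1)^2*(1-u^2)^4*(1-r^2)^4 < (1+2*r^2)*(1+2*u^2)*(1-r*u)^8 := by
  have hp0 : 0 ≤ r*u := mul_nonneg hr0.le hu0
  have hp1 : r*u < 1 := by nlinarith
  have hG := Gpos (r*u) ((u+r)^2) ((1+r*u)^2) hp0 hp1
  have hu2 : 0 ≤ 1 - u^2 := by nlinarith
  have hr2 : 0 ≤ 1 - r^2 := by nlinarith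
  have h2 : 0 < 3*(1-r*u)^6*(1+2*(r*u)^2) := by
    have := sub_pos.2 hp1
    positivity
  have hQ : 0 < (1-u^2)*(1-r^2)*((6+32*(r*u)+76*(r*u)^2+120*(r*u)^3+118*(r*u)^4+56*(r*u)^5+24*(r*u)^6)
      - (4+20*(r*u)+36*(r*u)^2+32*(r*u)^3+16*(r*u)^4)*((u+r)^2+(1+r*u)^2)
      + (1+2*(r*u))^2*(((u+r)^2)^2+(u+r)^2*(1+r*u)^2+((1+r*u)^2)^2))
      + 3*(1-r*u)^6*(1+2*(r*u)^2) := by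
    have h1 : 0 ≤ (1-u^2)*(1-r^2)*((6+32*(r*u)+76*(r*u)^2+120*(r*u)^3+118*(r*u)^4+56*(r*u)^5+24*(r*u)^6)
      - (4+20*(r*u)+36*(r*u)^2+32*(r*u)^3+16*(r*u)^4)*((u+r)^2+(1+r*u)^2)
      + (1+2*(r*u))^2*(((u+r)^2)^2+(u+r)^2*(1+r*u)^2+((1+r*u)^2)^2)) :=
      mul_nonneg (mul_nonneg hu2 hr2) hG.le
    linarith
  have hsq : 0 < (u-r)^2 := by
    rcases Ne.lt_or_gt (sub_ne_zero.2 hne) with h | h <;> nlinarith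
  have hprod := mul_pos hsq hQ
  nlinarith [hprod]

lemma Fval (ρ : ℝ) (hρ0 : 0 < ρ) (hρ1 : ρ < 1) :
    4*(2*ρ*ρ+1)*(1-ρ^2)^2 / ((1-ρ*ρ)^4 * Real.sqrt (1+2*ρ^2))
      = 4*Real.sqrt (1+2*ρ^2) / (1-ρ^2)^2 := by
  have h1 : (0:ℝ) < 1 - ρ^2 := by nlinarith
  have hs : Real.sqrt (1+2*ρ^2) * Real.sqrt (1+2*ρ^2) = 1+2*ρ^2 :=
    Real.mul_self_sqrt (by positivity)
  have hspos : 0 < Real.sqrt (1+2*ρ^2) := Real.sqrt_pos.2 (by positivity)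
  have hs2 : Real.sqrt (1+2*ρ^2) ^ 2 = 1+2*ρ^2 := Real.sq_sqrt (by positivity)
  have h1' : (0:ℝ) < 1 - ρ*ρ := by nlinarith
  have hd1 : ((1-ρ*ρ)^4 * Real.sqrt (1+2*ρ^2)) ≠ 0 := (mul_pos (pow_pos h1' 4) hspos).ne'
  have hd2 : ((1-ρ^2)^2 : ℝ) ≠ 0 := by positivity
  rw [div_eq_div_iff hd1 hd2]
  linear_combination (-(4*(1-ρ*ρ)^4)) * hs2

lemma Fmax (ρ u : ℝ) (hρ0 : 0 < ρ) (hρ1 : ρ < 1) (hu0 : 0 ≤ u) (hu1 : u ≤ 1)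
    (hne : u ≠ ρ) :
    4*(2*ρ*u+1)*(1-u^2)^2 / ((1-ρ*u)^4 * Real.sqrt (1+2*u^2))
      < 4*Real.sqrt (1+2*ρ^2) / (1-ρ^2)^2 := by
  have hpu : ρ*u < 1 := by nlinarith
  have hpu0 : 0 < 1 - ρ*u := sub_pos.2 hpu
  have hsu : 0 < Real.sqrt (1+2*u^2) := Real.sqrt_pos.2 (by positivity)
  have hsr : 0 < Real.sqrt (1+2*ρ^2) := Real.sqrt_pos.2 (by positivity)
  have h1 : (0:ℝ) < 1 - ρ^2 := by nlinarith
  rw [div_lt_div_iff₀ (by positivity) (by positivity)]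
  -- goal : 4*(2ρu+1)*(1-u²)² * (1-ρ²)² < 4*√(1+2ρ²) * ((1-ρu)⁴ * √(1+2u²))
  have hL : 0 ≤ 4*(2*ρ*u+1)*(1-u^2)^2 * (1-ρ^2)^2 := by positivity
  have hR : 0 ≤ 4*Real.sqrt (1+2*ρ^2) * ((1-ρ*u)^4 * Real.sqrt (1+2*u^2)) := by positivity
  refine lt_of_pow_lt_pow_left₀ 2 hR ?_
  have hr2 : Real.sqrt (1+2*ρ^2) ^ 2 = 1+2*ρ^2 := Real.sq_sqrt (by positivity)
  have hu2 : Real.sqrt (1+2*u^2) ^ 2 = 1+2*u^2 := Real.sq_sqrt (by positivity)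
  have key := keypoly ρ u hρ0 hρ1 hu0 hu1 hne
  calc (4*(2*ρ*u+1)*(1-u^2)^2 * (1-ρ^2)^2)^2
      = 16*((2*ρ*u+1)^2*(1-u^2)^4*(1-ρ^2)^4) := by ring
    _ < 16*((1+2*ρ^2)*(1+2*u^2)*(1-ρ*u)^8) := by linarith
    _ = (4*Real.sqrt (1+2*ρ^2) * ((1-ρ*u)^4 * Real.sqrt (1+2*u^2)))^2 := by
        rw [mul_pow, mul_pow, mul_pow, hr2, hu2]; ring

lemma WfunVal (ρ : ℝ) (hρ0 : 0 < ρ) (hρ1 : ρ < 1) :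
    Wfun ρ (ρ:ℂ) = 4*Real.sqrt (1+2*ρ^2)/(1-ρ^2)^2 := by
  have h1 : (0:ℝ) < 1 - ρ^2 := by nlinarith
  have hspos : 0 < Real.sqrt (1+2*ρ^2) := Real.sqrt_pos.2 (by positivity)
  have hs2 : Real.sqrt (1+2*ρ^2)^2 = 1+2*ρ^2 := Real.sq_sqrt (by positivity)
  rw [Wfun]
  simp only [Complex.ofReal_re, Complex.ofReal_im]
  rw [show (4*ρ*(ρ*(ρ^2+0^2)+ρ)+1 : ℝ) = (2*ρ^2+1)^2 by ring,
      Real.sqrt_sq (by positivity : (0:ℝ) ≤ 2*ρ^2+1),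
      show (1+2*(ρ^2+0^2) : ℝ) = 1+2*ρ^2 by ring]
  have hBpos : (0:ℝ) < ρ^2*(ρ^2+0^2)-2*ρ*ρ+1 := by nlinarith
  have hd1 : ((ρ^2*(ρ^2+0^2)-2*ρ*ρ+1)^2 * Real.sqrt (1+2*ρ^2)) ≠ 0 :=
    (mul_pos (pow_pos hBpos 2) hspos).ne'
  rw [div_eq_div_iff hd1 (pow_pos h1 2).ne']
  linear_combination (-(4*(1-ρ^2)^4)) * hs2

set_option maxHeartbeats 1000000 in
/-- `W_ρ` attains its global maximum over the closed unit disk at `(ρ, 0)` and only there,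
with the stated maximal value. -/
theorem W_rho_global_max (ρ : ℝ) (hρ : ρ ∈ Set.Ioo (0 : ℝ) 1) :
    (∀ ξ ∈ closedBall (0 : ℂ) 1, ξ ≠ (ρ : ℂ) → Wfun ρ ξ < Wfun ρ (ρ : ℂ)) ∧
    Wfun ρ (ρ : ℂ) =
      4 * (ρ ^ 2 - 1) ^ 2 * Real.sqrt (4 * ρ * (ρ ^ 3 + ρ) + 1) /
        (Real.sqrt (2 * ρ ^ 2 + 1) * (ρ ^ 4 - 2 * ρ ^ 2 + 1) ^ 2) := by
  obtain ⟨hρ0, hρ1⟩ := hρ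
  have h1 : (0:ℝ) < 1 - ρ^2 := by nlinarith
  have hspos : 0 < Real.sqrt (1+2*ρ^2) := Real.sqrt_pos.2 (by positivity)
  have hs2 : Real.sqrt (1+2*ρ^2)^2 = 1+2*ρ^2 := Real.sq_sqrt (by positivity)
  have hWρ := WfunVal ρ hρ0 hρ1
  constructor
  · intro ξ hξ hne
    have hnorm : ξ.re^2 + ξ.im^2 ≤ 1 := by
      have h := mem_closedBall_zero_iff.1 hξ
      have h2 : ‖ξ‖ ≤ 1 := h
      have h3 := Complex.sq_norm ξ
      rw [Complex.normSq_apply] at h3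
      nlinarith [norm_nonneg ξ]
    have hs0 : (0:ℝ) ≤ ξ.re^2+ξ.im^2 := by positivity
    set u := Real.sqrt (ξ.re^2 + ξ.im^2) with hudef
    have hu2 : u^2 = ξ.re^2+ξ.im^2 := Real.sq_sqrt hs0
    have hu0 : 0 ≤ u := Real.sqrt_nonneg _
    have hu1 : u ≤ 1 := Real.sqrt_le_one.mpr hnorm
    have hxu : ξ.re ≤ u := by
      calc ξ.re ≤ |ξ.re| := le_abs_self _
        _ = Real.sqrt (ξ.re^2) := (Real.sqrt_sq_eq_abs _).symm
        _ ≤ u := Real.sqrt_le_sqrt (by nlinarith)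
    rw [hWρ]
    by_cases hcase : ξ.re^2 + ξ.im^2 = 1
    · have hW0 : Wfun ρ ξ = 0 := by
        rw [Wfun, show (1 - ξ.re^2 - ξ.im^2 : ℝ) = 0 by linarith]
        simp
      rw [hW0]
      exact div_pos (by positivity) (pow_pos h1 2)
    · have hslt : ξ.re^2+ξ.im^2 < 1 := lt_of_le_of_ne hnorm hcase
      have hult : u < 1 := by nlinarith [hu2]
      have hWeq : Wfun ρ ξ = 4*Real.sqrt (4*ρ*(ρ*u^2+ξ.re)+1)*(1-u^2)^2 /
          ((ρ^2*u^2-2*ρ*ξ.re+1)^2*Real.sqrt (1+2*u^2)) := by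
        rw [Wfun, hu2]; ring_nf
      have hA0 : (0:ℝ) ≤ 4*ρ*(ρ*u^2+ξ.re)+1 := by
        nlinarith [sq_nonneg (2*ρ*ξ.re+1), hu2, sq_nonneg ξ.im, sq_nonneg ρ, mul_nonneg (mul_nonneg hρ0.le hρ0.le) (sq_nonneg ξ.im)]
      have hAle : 4*ρ*(ρ*u^2+ξ.re)+1 ≤ (2*ρ*u+1)^2 := by
        nlinarith [mul_le_mul_of_nonneg_left hxu hρ0.le]
      have hsqA : Real.sqrt (4*ρ*(ρ*u^2+ξ.re)+1) ≤ 2*ρ*u+1 := by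
        rw [show (2*ρ*u+1 : ℝ) = Real.sqrt ((2*ρ*u+1)^2) from
          (Real.sqrt_sq (by positivity)).symm]
        exact Real.sqrt_le_sqrt hAle
      have hρu1 : ρ*u < 1 := by nlinarith
      have hBge : (1-ρ*u)^2 ≤ ρ^2*u^2 - 2*ρ*ξ.re + 1 := by
        nlinarith [mul_le_mul_of_nonneg_left hxu hρ0.le]
      have hBpos : (0:ℝ) < (1-ρ*u)^2 := pow_pos (sub_pos.2 hρu1) 2
      have hB0 : (0:ℝ) ≤ ρ^2*u^2 - 2*ρ*ξ.re + 1 := le_trans hBpos.le hBge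
      have hB4 : (1-ρ*u)^4 ≤ (ρ^2*u^2 - 2*ρ*ξ.re + 1)^2 := by
        calc (1-ρ*u)^4 = (1-ρ*u)^2*(1-ρ*u)^2 := by ring
          _ ≤ (ρ^2*u^2 - 2*ρ*ξ.re + 1)*(ρ^2*u^2 - 2*ρ*ξ.re + 1) :=
              mul_le_mul hBge hBge hBpos.le hB0
          _ = (ρ^2*u^2 - 2*ρ*ξ.re + 1)^2 := by ring
      have hsu : 0 < Real.sqrt (1+2*u^2) := Real.sqrt_pos.2 (by positivity)
      have hD2pos : 0 < (1-ρ*u)^4*Real.sqrt (1+2*u^2) :=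
        mul_pos (pow_pos (sub_pos.2 hρu1) 4) hsu
      have hD21 : (1-ρ*u)^4*Real.sqrt (1+2*u^2)
          ≤ (ρ^2*u^2 - 2*ρ*ξ.re + 1)^2*Real.sqrt (1+2*u^2) :=
        mul_le_mul_of_nonneg_right hB4 hsu.le
      have hN1nonneg : (0:ℝ) ≤ 4*Real.sqrt (4*ρ*(ρ*u^2+ξ.re)+1)*(1-u^2)^2 := by positivity
      have hstep1 : Wfun ρ ξ ≤
          4*Real.sqrt (4*ρ*(ρ*u^2+ξ.re)+1)*(1-u^2)^2 / ((1-ρ*u)^4*Real.sqrt (1+2*u^2)) := by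
        rw [hWeq]
        exact div_le_div_of_nonneg_left hN1nonneg hD2pos hD21
      rcases eq_or_ne u ρ with huρ | huρ
      · -- u = ρ : here ξ.re < u is forced
        have hxlt : ξ.re < u := by
          rcases lt_or_eq_of_le hxu with h | h
          · exact h
          · exfalso
            apply hne
            have hy2 : ξ.im^2 = 0 := by nlinarith [hu2]
            have hy : ξ.im = 0 := by
              exact (pow_eq_zero_iff two_ne_zero).1 hy2
            apply Complex.ext
            · rw [Complex.ofReal_re, h, huρ]
            · rw [Complex.ofReal_im]; exact hy
        have hAlt : 4*ρ*(ρ*u^2+ξ.re)+1 < (2*ρ*u+1)^2 := by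
          nlinarith [mul_lt_mul_of_pos_left hxlt hρ0]
        have hsqAlt : Real.sqrt (4*ρ*(ρ*u^2+ξ.re)+1) < 2*ρ*u+1 := by
          rw [show (2*ρ*u+1 : ℝ) = Real.sqrt ((2*ρ*u+1)^2) from
            (Real.sqrt_sq (by positivity)).symm]
          exact Real.sqrt_lt_sqrt hA0 hAlt
        have hu2pos : (0:ℝ) < (1-u^2)^2 := pow_pos (by nlinarith : (0:ℝ) < 1-u^2) 2
        have hN12 : 4*Real.sqrt (4*ρ*(ρ*u^2+ξ.re)+1)*(1-u^2)^2 < 4*(2*ρ*u+1)*(1-u^2)^2 := by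
          have h4 : 4*Real.sqrt (4*ρ*(ρ*u^2+ξ.re)+1) < 4*(2*ρ*u+1) := by linarith
          exact mul_lt_mul_of_pos_right h4 hu2pos
        have hstep2 : 4*Real.sqrt (4*ρ*(ρ*u^2+ξ.re)+1)*(1-u^2)^2/((1-ρ*u)^4*Real.sqrt (1+2*u^2))
            < 4*(2*ρ*u+1)*(1-u^2)^2/((1-ρ*u)^4*Real.sqrt (1+2*u^2)) :=
          (div_lt_div_iff_of_pos_right hD2pos).2 hN12
        have hFval : 4*(2*ρ*u+1)*(1-u^2)^2/((1-ρ*u)^4*Real.sqrt (1+2*u^2))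
            = 4*Real.sqrt (1+2*ρ^2)/(1-ρ^2)^2 := by
          rw [huρ]; exact Fval ρ hρ0 hρ1
        calc Wfun ρ ξ ≤ _ := hstep1
          _ < _ := hstep2
          _ = _ := hFval
      · have hFmax := Fmax ρ u hρ0 hρ1 hu0 hu1 huρ
        have hN12' : 4*Real.sqrt (4*ρ*(ρ*u^2+ξ.re)+1)*(1-u^2)^2
            ≤ 4*(2*ρ*u+1)*(1-u^2)^2 :=
          mul_le_mul_of_nonneg_right (by linarith) (sq_nonneg _)
        calc Wfun ρ ξ ≤ _ := hstep1
          _ ≤ 4*(2*ρ*u+1)*(1-u^2)^2/((1-ρ*u)^4*Real.sqrt (1+2*u^2)) :=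
              (div_le_div_iff_of_pos_right hD2pos).2 hN12'
          _ < _ := hFmax
  · rw [hWρ, show (4*ρ*(ρ^3+ρ)+1 : ℝ) = (2*ρ^2+1)^2 by ring,
      Real.sqrt_sq (by positivity : (0:ℝ) ≤ 2*ρ^2+1),
      show (2*ρ^2+1 : ℝ) = 1+2*ρ^2 by ring]
    rw [div_eq_div_iff (pow_pos h1 2).ne'
      (mul_pos hspos (pow_pos (by nlinarith : (0:ℝ) < ρ^4-2*ρ^2+1) 2)).ne']
    linear_combination (4*(ρ^4-2*ρ^2+1)^2) * hs2
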